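/- For the biased assimilation model on the undirected complete graph on $N$ vertices with all weights $w_{ij} = 1$ ($i \ne j$), $w_{ii} \ge 0$, and $b_i = 1$ for all $i$: at the polarization fixed point with $n_1$ agents at $0$ and $n_2 = N - n_1$ agents at $1$ (where $2 \le n_1 \le N-2$), the Jacobian is diagonal with entries $(w_{ii} + n_2)/(w_{ii} + n_1 - 1)$ for agents at $0$ and $(w_{ii} + n_1)/(w_{ii} + n_2 - 1)$ for agents at $1$; at least one entry exceeds $1$, so the fixed point is unstable. -/

import Mathlib

open Finset Filter Topology

/-- Weighted sum of neighbors' opinions: `s_i = ∑_{j ∈ N_i} w_{ij} x_j`. -/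
noncomputable def wsum {N : ℕ} (w : Fin N → Fin N → ℝ) (Nbr : Fin N → Finset (Fin N))
    (x : Fin N → ℝ) (i : Fin N) : ℝ :=
  ∑ j ∈ Nbr i, w i j * x j

/-- Weighted degree `d_i = ∑_{j ∈ N_i} w_{ij}`. -/
noncomputable def degw {N : ℕ} (w : Fin N → Fin N → ℝ) (Nbr : Fin N → Finset (Fin N))
    (i : Fin N) : ℝ :=
  ∑ j ∈ Nbr i, w i j

/-- Biased assimilation update map (componentwise). Powers are real powers. -/
noncomputable def F {N : ℕ} (w : Fin N → Fin N → ℝ) (Nbr : Fin N → Finset (Fin N))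
    (b : Fin N → ℝ) (x : Fin N → ℝ) (i : Fin N) : ℝ :=
  (w i i * x i + x i ^ b i * wsum w Nbr x i) /
    (w i i + x i ^ b i * wsum w Nbr x i + (1 - x i) ^ b i * (degw w Nbr i - wsum w Nbr x i))

/-- The directed influence graph (edge `j → i` iff `j ∈ Nbr i`) is strongly connected. -/
def StronglyConnected {N : ℕ} (Nbr : Fin N → Finset (Fin N)) : Prop :=
  ∀ i j : Fin N, Relation.TransGen (fun a c => a ∈ Nbr c) i j

/-- Lyapunov stability of a fixed point of the discrete-time system `x⁺ = G x`. -/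
def LyapStable {E : Type*} [NormedAddCommGroup E] (G : E → E) (q : E) : Prop :=
  ∀ ε > 0, ∃ δ > 0, ∀ x, ‖x - q‖ < δ → ∀ k : ℕ, ‖G^[k] x - q‖ < ε

/-- Local exponential stability of a fixed point of `x⁺ = G x`. -/
def LocExpStable {E : Type*} [NormedAddCommGroup E] (G : E → E) (q : E) : Prop :=
  ∃ δ > 0, ∃ C > 0, ∃ r, 0 ≤ r ∧ r < 1 ∧
    ∀ x, ‖x - q‖ ≤ δ → ∀ k : ℕ, ‖G^[k] x - q‖ ≤ C * r ^ k * ‖x - q‖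

/-- Spectral radius of a real square matrix: supremum of moduli of its complex eigenvalues. -/
noncomputable def specRad {n : ℕ} (M : Matrix (Fin n) (Fin n) ℝ) : ℝ :=
  sSup {r : ℝ | ∃ μ : ℂ, (M.map (fun a => (a : ℂ))).charpoly.IsRoot μ ∧ r = ‖μ‖}

/-! ### Auxiliary lemmas -/

lemma F_eq {N : ℕ} (hN : 1 ≤ N) (w : Fin N → Fin N → ℝ) (hw : ∀ i j, i ≠ j → w i j = 1)
    (Nbr : Fin N → Finset (Fin N)) (hNbr : ∀ i, Nbr i = Finset.univ.erase i)
    (b : Fin N → ℝ) (hb : ∀ i, b i = 1)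
    (y : Fin N → ℝ) (i : Fin N) :
    F w Nbr b y i =
      (w i i * y i + y i * ((∑ k, y k) - y i)) /
      (w i i + y i * ((∑ k, y k) - y i)
        + (1 - y i) * (((N : ℝ) - 1) - ((∑ k, y k) - y i))) := by
  have hws : wsum w Nbr y i = (∑ k, y k) - y i := by
    rw [wsum, hNbr, Finset.sum_congr rfl
      (fun k hk => by rw [hw i k (Ne.symm (Finset.mem_erase.1 hk).1), one_mul]),
      Finset.sum_erase_eq_sub (Finset.mem_univ i)]
  have hdg : degw w Nbr i = (N : ℝ) - 1 := by
    rw [degw, hNbr, Finset.sum_congr rfl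
      (fun k hk => hw i k (Ne.symm (Finset.mem_erase.1 hk).1)),
      Finset.sum_const, Finset.card_erase_of_mem (Finset.mem_univ i)]
    simp [Nat.cast_sub hN, Finset.card_univ]
  rw [F, hws, hdg, hb, Real.rpow_one, Real.rpow_one]

lemma sum_update {N : ℕ} (x : Fin N → ℝ) {B : ℝ} (hsum : ∑ k, x k = B) (i : Fin N) (a : ℝ) :
    ∑ k, Function.update x i a k = B + a - x i := by
  rw [Finset.sum_update_of_mem (Finset.mem_univ i), ← Finset.erase_eq,
    Finset.sum_erase_eq_sub (Finset.mem_univ i), hsum]; ring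

lemma F_update0 {N : ℕ} (hN : 1 ≤ N) (w : Fin N → Fin N → ℝ) (hw : ∀ i j, i ≠ j → w i j = 1)
    (hwii : ∀ i, 0 ≤ w i i)
    (Nbr : Fin N → Finset (Fin N)) (hNbr : ∀ i, Nbr i = Finset.univ.erase i)
    (b : Fin N → ℝ) (hb : ∀ i, b i = 1)
    (x : Fin N → ℝ) (hx : ∀ i, x i = 0 ∨ x i = 1) {A B : ℝ}
    (hsum : ∑ k, x k = B) (hNcast : (N : ℝ) = A + B) (hA : 2 ≤ A) (hB : 2 ≤ B)
    (i : Fin N) (hxi : x i = 0) (a : ℝ) (ha : 0 < a) :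
    F w Nbr b (Function.update x i a) = Function.update x i
      ((w i i * a + a * B) / (w i i + a * B + (1 - a) * (A - 1))) := by
  funext j
  have hsumu : ∑ k, Function.update x i a k = B + a := by
    rw [sum_update x hsum, hxi]; ring
  rw [F_eq hN w hw Nbr hNbr b hb, hsumu]
  by_cases hji : j = i
  · subst hji
    simp only [Function.update_self]
    rw [show B + a - a = B from by ring, show (N : ℝ) - 1 - B = A - 1 from by rw [hNcast]; ring]
  · simp only [Function.update_of_ne hji]
    rcases hx j with h0 | h1
    · rw [h0]; simp
    · rw [h1, div_eq_one_iff_eq (by nlinarith [hwii j])]; ring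

lemma F_update1 {N : ℕ} (hN : 1 ≤ N) (w : Fin N → Fin N → ℝ) (hw : ∀ i j, i ≠ j → w i j = 1)
    (hwii : ∀ i, 0 ≤ w i i)
    (Nbr : Fin N → Finset (Fin N)) (hNbr : ∀ i, Nbr i = Finset.univ.erase i)
    (b : Fin N → ℝ) (hb : ∀ i, b i = 1)
    (x : Fin N → ℝ) (hx : ∀ i, x i = 0 ∨ x i = 1) {A B : ℝ}
    (hsum : ∑ k, x k = B) (hNcast : (N : ℝ) = A + B) (hA : 2 ≤ A) (hB : 2 ≤ B)
    (i : Fin N) (hxi : x i = 1) (a : ℝ) (ha : 0 < a) :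
    F w Nbr b (Function.update x i a) = Function.update x i
      ((w i i * a + a * (B - 1)) / (w i i + a * (B - 1) + (1 - a) * A)) := by
  funext j
  have hsumu : ∑ k, Function.update x i a k = B - 1 + a := by
    rw [sum_update x hsum, hxi]; ring
  rw [F_eq hN w hw Nbr hNbr b hb, hsumu]
  by_cases hji : j = i
  · subst hji
    simp only [Function.update_self]
    rw [show B - 1 + a - a = B - 1 from by ring,
      show (N : ℝ) - 1 - (B - 1) = A from by rw [hNcast]; ring]
  · simp only [Function.update_of_ne hji]
    rcases hx j with h0 | h1
    · rw [h0]; simp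
    · rw [h1, div_eq_one_iff_eq (by nlinarith [hwii j])]; ring

lemma g_pos {W A B a : ℝ} (hW : 0 ≤ W) (hA : 2 ≤ A) (hB : 2 ≤ B) (ha : 0 < a) (ha1 : a < 1) :
    0 < (W * a + a * B) / (W + a * B + (1 - a) * (A - 1)) := by
  apply div_pos (by nlinarith) (by nlinarith)

lemma g_lt_one {W A B a : ℝ} (hW : 0 ≤ W) (hA : 2 ≤ A) (hB : 2 ≤ B) (ha : 0 < a) (ha1 : a < 1) :
    (W * a + a * B) / (W + a * B + (1 - a) * (A - 1)) < 1 := by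
  rw [div_lt_one (by nlinarith)]; nlinarith

lemma g_growth {W A B a : ℝ} (hW : 0 ≤ W) (hA : 2 ≤ A) (hB : 2 ≤ B) (hAB : A ≤ B)
    (ha : 0 < a) (ha2 : a ≤ 1 / 2) :
    (W + B) / (W + (A + B - 1) / 2) * a ≤ (W * a + a * B) / (W + a * B + (1 - a) * (A - 1)) := by
  have hD : (0:ℝ) < W + a * B + (1 - a) * (A - 1) := by nlinarith
  have hD0 : (0:ℝ) < W + (A + B - 1) / 2 := by nlinarith
  rw [div_mul_eq_mul_div, show (W + B) * a = W * a + a * B from by ring]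
  apply div_le_div_of_nonneg_left (by nlinarith) hD (by nlinarith)

lemma g_ratio_gt_one {W A B : ℝ} (hW : 0 ≤ W) (hA : 2 ≤ A) (hB : 2 ≤ B) (hAB : A ≤ B) :
    1 < (W + B) / (W + (A + B - 1) / 2) := by
  rw [lt_div_iff₀ (by nlinarith)]; nlinarith

lemma h_pos {W A B a : ℝ} (hW : 0 ≤ W) (hA : 2 ≤ A) (hB : 2 ≤ B) (ha : 0 < a) (ha1 : a < 1) :
    0 < (W * a + a * (B - 1)) / (W + a * (B - 1) + (1 - a) * A) := by
  apply div_pos (by nlinarith) (by nlinarith)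

lemma h_decay {W A B a c0 : ℝ} (hW : 0 ≤ W) (hA : 2 ≤ A) (hB : 2 ≤ B) (hBA : B + 1 ≤ A)
    (ha : 0 < a) (hac : a ≤ c0) (hc1 : c0 < 1) :
    (W * a + a * (B - 1)) / (W + a * (B - 1) + (1 - a) * A)
      ≤ (W + B - 1) / (W + c0 * (B - 1) + (1 - c0) * A) * a := by
  have hD : (0:ℝ) < W + a * (B - 1) + (1 - a) * A := by nlinarith
  have hD0 : (0:ℝ) < W + c0 * (B - 1) + (1 - c0) * A := by nlinarith
  rw [div_mul_eq_mul_div, show (W + B - 1) * a = W * a + a * (B - 1) from by ring]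
  apply div_le_div_of_nonneg_left (by nlinarith) ?_ (by nlinarith)
  exact hD0

lemma h_ratio_lt_one {W A B c0 : ℝ} (hW : 0 ≤ W) (hA : 2 ≤ A) (hB : 2 ≤ B) (hBA : B + 1 ≤ A)
    (hc0 : 0 < c0) (hc1 : c0 < 1) :
    (W + B - 1) / (W + c0 * (B - 1) + (1 - c0) * A) < 1 := by
  rw [div_lt_one (by nlinarith)]; nlinarith

lemma h_ratio_pos {W A B c0 : ℝ} (hW : 0 ≤ W) (hA : 2 ≤ A) (hB : 2 ≤ B)
    (hc0 : 0 < c0) (hc1 : c0 < 1) :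
    0 < (W + B - 1) / (W + c0 * (B - 1) + (1 - c0) * A) := by
  apply div_pos (by nlinarith) (by nlinarith)

lemma fderiv_F {N : ℕ} (hN : 1 ≤ N) (w : Fin N → Fin N → ℝ) (hw : ∀ i j, i ≠ j → w i j = 1)
    (hwii : ∀ i, 0 ≤ w i i)
    (Nbr : Fin N → Finset (Fin N)) (hNbr : ∀ i, Nbr i = Finset.univ.erase i)
    (b : Fin N → ℝ) (hb : ∀ i, b i = 1)
    (x : Fin N → ℝ) (hx : ∀ i, x i = 0 ∨ x i = 1) {A B : ℝ}
    (hsum : ∑ k, x k = B) (hNcast : (N : ℝ) = A + B) (hA : 2 ≤ A) (hB : 2 ≤ B)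
    (i j : Fin N) :
    fderiv ℝ (fun y => F w Nbr b y i) x (Pi.single j 1) =
      if i = j then
        (if x i = 0 then (w i i + B) / (w i i + A - 1)
         else (w i i + A) / (w i i + B - 1))
      else 0 := by
  classical
  set W := w i i with hW
  set v : Fin N → ℝ := Pi.single j 1 with hv
  set e : ℝ := if i = j then 1 else 0 with he
  have hvi : v i = e := by
    rw [hv, Pi.single_apply, he]
  have hvsum : ∑ k, v k = 1 := Fintype.sum_pi_single' j 1
  set S0 : ℝ := B - x i with hS0
  set u : ℝ → ℝ := fun t => W * (x i + t * e) + (x i + t * e) * (S0 + t * (1 - e)) with hu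
  set dn : ℝ → ℝ := fun t => W + (x i + t * e) * (S0 + t * (1 - e))
    + (1 - (x i + t * e)) * (((N : ℝ) - 1) - (S0 + t * (1 - e))) with hdn
  have hdn0 : dn 0 ≠ 0 := by
    rw [hdn]
    rcases hx i with h0 | h1
    · rw [hS0, h0]
      have : (0:ℝ) < W + (0 + 0 * e) * (B - 0 + 0 * (1 - e))
          + (1 - (0 + 0 * e)) * ((N:ℝ) - 1 - (B - 0 + 0 * (1 - e))) := by
        rw [hNcast]; nlinarith [hwii i]
      exact ne_of_gt this
    · rw [hS0, h1]
      have : (0:ℝ) < W + (1 + 0 * e) * (B - 1 + 0 * (1 - e))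
          + (1 - (1 + 0 * e)) * ((N:ℝ) - 1 - (B - 1 + 0 * (1 - e))) := by
        nlinarith [hwii i]
      exact ne_of_gt this
  have hpath : HasDerivAt (fun t : ℝ => x + t • v) v 0 := by
    simpa using ((hasDerivAt_id (0:ℝ)).smul_const v).const_add x
  have hcomp : (fun t : ℝ => F w Nbr b (x + t • v) i) = fun t => u t / dn t := by
    funext t
    have h1 : (x + t • v) i = x i + t * e := by simp [hvi]
    have hsB : ∑ k, (x + t • v) k = B + t := by
      simp only [Pi.add_apply, Pi.smul_apply, smul_eq_mul, Finset.sum_add_distrib,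
        ← Finset.mul_sum, hsum, hvsum, mul_one]
    rw [F_eq hN w hw Nbr hNbr b hb, hsB, h1,
      show B + t - (x i + t * e) = S0 + t * (1 - e) from by rw [hS0]; ring]
  have hyi : HasDerivAt (fun t : ℝ => x i + t * e) e 0 := by
    simpa using ((hasDerivAt_id (0:ℝ)).mul_const e).const_add (x i)
  have hS : HasDerivAt (fun t : ℝ => S0 + t * (1 - e)) (1 - e) 0 := by
    simpa using ((hasDerivAt_id (0:ℝ)).mul_const (1 - e)).const_add S0
  have hyi' : HasDerivAt (fun t : ℝ => 1 - (x i + t * e)) (-e) 0 := by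
    simpa using (hasDerivAt_const (0:ℝ) (1:ℝ)).fun_sub hyi
  have hS' : HasDerivAt (fun t : ℝ => ((N:ℝ) - 1) - (S0 + t * (1 - e))) (-(1 - e)) 0 := by
    simpa using (hasDerivAt_const (0:ℝ) ((N:ℝ) - 1)).fun_sub hS
  have hud : HasDerivAt u (W * e + (e * S0 + x i * (1 - e))) 0 := by
    have h := (hyi.const_mul W).fun_add (hyi.fun_mul hS)
    convert h using 1
    any_goals rfl
    ring_nf
  have hdnd : HasDerivAt dn
      (0 + (e * S0 + x i * (1 - e)) + ((-e) * (((N:ℝ) - 1) - S0) + (1 - x i) * (-(1 - e)))) 0 := by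
    have h := ((hasDerivAt_const (0:ℝ) W).fun_add (hyi.fun_mul hS)).fun_add (hyi'.fun_mul hS')
    convert h using 1
    any_goals rfl
    ring_nf
  have hquot := hud.div hdnd hdn0
  have hproj : ∀ k : Fin N, DifferentiableAt ℝ (fun y : Fin N → ℝ => y k) x :=
    fun k => (hasFDerivAt_apply k x).differentiableAt
  have hSy : DifferentiableAt ℝ (fun y : Fin N → ℝ => (∑ k, y k) - y i) x :=
    (DifferentiableAt.fun_sum fun k _ => hproj k).sub (hproj i)
  have hNum : DifferentiableAt ℝ
      (fun y : Fin N → ℝ => w i i * y i + y i * ((∑ k, y k) - y i)) x :=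
    ((hproj i).const_mul _).add ((hproj i).mul hSy)
  have hDen : DifferentiableAt ℝ (fun y : Fin N → ℝ =>
      w i i + y i * ((∑ k, y k) - y i)
        + (1 - y i) * (((N : ℝ) - 1) - ((∑ k, y k) - y i))) x := by
    apply DifferentiableAt.add
    · exact (differentiableAt_const _).add ((hproj i).mul hSy)
    · exact ((differentiableAt_const _).sub (hproj i)).mul ((differentiableAt_const _).sub hSy)
  have hDen0 : (w i i + x i * ((∑ k, x k) - x i)
        + (1 - x i) * (((N : ℝ) - 1) - ((∑ k, x k) - x i))) ≠ 0 := by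
    have : dn 0 = w i i + x i * ((∑ k, x k) - x i)
        + (1 - x i) * (((N : ℝ) - 1) - ((∑ k, x k) - x i)) := by
      rw [hdn, hsum, hS0]; ring
    rw [← this]; exact hdn0
  have hfe : (fun y => F w Nbr b y i) = fun y =>
      (w i i * y i + y i * ((∑ k, y k) - y i)) *
      (w i i + y i * ((∑ k, y k) - y i)
        + (1 - y i) * (((N : ℝ) - 1) - ((∑ k, y k) - y i)))⁻¹ := by
    funext y
    rw [F_eq hN w hw Nbr hNbr b hb, div_eq_mul_inv]
  have hdiff : DifferentiableAt ℝ (fun y => F w Nbr b y i) x := by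
    rw [hfe]
    exact hNum.mul (hDen.inv hDen0)
  have hchain : HasDerivAt (fun t : ℝ => F w Nbr b (x + t • v) i)
      (fderiv ℝ (fun y => F w Nbr b y i) x v) 0 := by
    have hl : HasFDerivAt (fun y => F w Nbr b y i) (fderiv ℝ (fun y => F w Nbr b y i) x)
        ((fun t : ℝ => x + t • v) 0) := by
      simpa using hdiff.hasFDerivAt
    have h2 := hl.comp_hasDerivAt 0 hpath
    exact h2
  rw [hcomp] at hchain
  have hder := hchain.unique hquot
  rw [hder]
  have hu0 : u 0 = x i * (W + S0) := by rw [hu]; ring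
  have hdneval : dn 0 = W + x i * S0 + (1 - x i) * (((N:ℝ) - 1) - S0) := by rw [hdn]; ring
  by_cases hij : i = j
  · rw [if_pos hij]
    have he1 : e = 1 := by rw [he, if_pos hij]
    rcases hx i with h0 | h1
    · rw [if_pos h0]
      have hS0v : S0 = B := by rw [hS0, h0]; ring
      have hdnv : dn 0 = W + A - 1 := by
        rw [hdneval, h0, hS0v, hNcast]; ring
      have hpos : (0:ℝ) < W + A - 1 := by nlinarith [hwii i]
      rw [hu0, hdnv, h0, hS0v, he1]
      field_simp
      ring
    · rw [if_neg (by rw [h1]; norm_num)]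
      have hS0v : S0 = B - 1 := by rw [hS0, h1]
      have hdnv : dn 0 = W + B - 1 := by rw [hdneval, h1, hS0v]; ring
      have hpos : (0:ℝ) < W + B - 1 := by nlinarith [hwii i]
      rw [hu0, hdnv, h1, hS0v, he1, hNcast]
      field_simp
      ring
  · rw [if_neg hij]
    have he0 : e = 0 := by rw [he, if_neg hij]
    rcases hx i with h0 | h1
    · rw [hu0, h0, he0]
      ring_nf
    · have hS0v : S0 = B - 1 := by rw [hS0, h1]
      have hdnv : dn 0 = W + B - 1 := by rw [hdneval, h1, hS0v]; ring
      have hpos : (0:ℝ) < W + B - 1 := by nlinarith [hwii i]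
      rw [hu0, hdnv, h1, hS0v, he0]
      field_simp
      ring

theorem stmt16 {N : ℕ} (n1 : ℕ) (hn1 : 2 ≤ n1) (hn2 : n1 ≤ N - 2)
    (w : Fin N → Fin N → ℝ) (hw : ∀ i j, i ≠ j → w i j = 1) (hwii : ∀ i, 0 ≤ w i i)
    (Nbr : Fin N → Finset (Fin N)) (hNbr : ∀ i, Nbr i = Finset.univ.erase i)
    (b : Fin N → ℝ) (hb : ∀ i, b i = 1)
    (x : Fin N → ℝ) (hx : ∀ i, x i = 0 ∨ x i = 1)
    (hcard : (Finset.univ.filter (fun i => x i = 0)).card = n1) :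
    (∀ i j, fderiv ℝ (fun y => F w Nbr b y i) x (Pi.single j 1) =
      if i = j then
        (if x i = 0 then (w i i + ((N - n1 : ℕ) : ℝ)) / (w i i + (n1 : ℝ) - 1)
         else (w i i + (n1 : ℝ)) / (w i i + ((N - n1 : ℕ) : ℝ) - 1))
      else 0) ∧
    (∃ i, 1 < (if x i = 0 then (w i i + ((N - n1 : ℕ) : ℝ)) / (w i i + (n1 : ℝ) - 1)
               else (w i i + (n1 : ℝ)) / (w i i + ((N - n1 : ℕ) : ℝ) - 1))) ∧
    ¬ LyapStable (F w Nbr b) x := by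
  classical
  have hNge : n1 + 2 ≤ N := by omega
  have hn2ge : 2 ≤ N - n1 := by omega
  have hN1 : 1 ≤ N := by omega
  set A : ℝ := (n1 : ℝ) with hAdef
  set B : ℝ := ((N - n1 : ℕ) : ℝ) with hBdef
  have hA : 2 ≤ A := by rw [hAdef]; exact_mod_cast hn1
  have hB : 2 ≤ B := by rw [hBdef]; exact_mod_cast hn2ge
  have hNcast : (N : ℝ) = A + B := by
    rw [hAdef, hBdef, ← Nat.cast_add]
    congr 1
    omega
  -- the number of ones
  have hcard1 : (Finset.univ.filter (fun k => ¬ x k = 0)).card = N - n1 := by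
    have h := Finset.card_filter_add_card_filter_not
      (s := (Finset.univ : Finset (Fin N))) (p := fun k => x k = 0)
    rw [hcard, Finset.card_univ, Fintype.card_fin] at h
    omega
  have hsum : ∑ k, x k = B := by
    rw [← Finset.sum_filter_add_sum_filter_not Finset.univ (fun k => x k = 0) x,
      Finset.sum_congr rfl (fun k hk => (Finset.mem_filter.1 hk).2), Finset.sum_const_zero,
      zero_add,
      Finset.sum_congr rfl (fun k hk => (hx k).resolve_left (Finset.mem_filter.1 hk).2),
      Finset.sum_const, hcard1, nsmul_eq_mul, mul_one, hBdef]
  refine ⟨fun i j => fderiv_F hN1 w hw hwii Nbr hNbr b hb x hx hsum hNcast hA hB i j, ?_, ?_⟩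
  · -- some diagonal entry exceeds 1
    rcases le_total A B with hAB | hBA
    · obtain ⟨i, hi⟩ := Finset.card_pos.1 (show 0 < (Finset.univ.filter (fun k => x k = 0)).card
        from by rw [hcard]; omega)
      have hxi : x i = 0 := (Finset.mem_filter.1 hi).2
      refine ⟨i, ?_⟩
      rw [if_pos hxi, lt_div_iff₀ (by nlinarith [hwii i])]
      nlinarith [hwii i]
    · obtain ⟨i, hi⟩ := Finset.card_pos.1 (show 0 < (Finset.univ.filter (fun k => ¬ x k = 0)).card
        from by rw [hcard1]; omega)
      have hxi : x i = 1 := (hx i).resolve_left (Finset.mem_filter.1 hi).2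
      refine ⟨i, ?_⟩
      rw [if_neg (by rw [hxi]; norm_num), lt_div_iff₀ (by nlinarith [hwii i])]
      nlinarith [hwii i]
  · -- instability
    intro hL
    obtain ⟨δ, hδ, hδ'⟩ := hL (1/2) (by norm_num)
    rcases le_or_gt A B with hAB | hBA
    · -- perturb a zero agent upward
      obtain ⟨i, hi⟩ := Finset.card_pos.1 (show 0 < (Finset.univ.filter (fun k => x k = 0)).card
        from by rw [hcard]; omega)
      have hxi : x i = 0 := (Finset.mem_filter.1 hi).2
      set W := w i i with hWdef
      have hW : 0 ≤ W := hwii i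
      set a0 : ℝ := min (δ/2) (1/4) with ha0def
      have ha0 : 0 < a0 := lt_min (by linarith) (by norm_num)
      have ha0q : a0 ≤ 1/4 := min_le_right _ _
      have ha01 : a0 < 1 := by linarith
      set y : Fin N → ℝ := Function.update x i a0 with hydef
      have hyx : y - x = Pi.single i a0 := by
        funext k
        by_cases hk : k = i
        · subst hk; simp [hydef, hxi]
        · simp [hydef, Function.update_of_ne hk, Pi.single_eq_of_ne hk]
      have hnorm : ‖y - x‖ = a0 := by
        rw [hyx, Pi.norm_single, Real.norm_of_nonneg ha0.le]
      have hδy : ∀ k : ℕ, ‖(F w Nbr b)^[k] y - x‖ < 1/2 := by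
        apply hδ'
        rw [hnorm]
        calc a0 ≤ δ/2 := min_le_left _ _
          _ < δ := by linarith
      set r : ℝ := (W + B) / (W + (A + B - 1) / 2) with hrdef
      have hr1 : 1 < r := g_ratio_gt_one hW hA hB hAB
      have orb : ∀ k : ℕ, ∃ c : ℝ, (F w Nbr b)^[k] y = Function.update x i c ∧
          0 < c ∧ c < 1 ∧ r ^ k * a0 ≤ c := by
        intro k
        induction k with
        | zero =>
          exact ⟨a0, by simp [hydef], ha0, ha01, by simp⟩
        | succ k ih =>
          obtain ⟨c, hc, hc0, hc1, hcr⟩ := ih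
          have hchalf : c ≤ 1/2 := by
            have h1 := hδy k
            rw [hc] at h1
            have h2 := norm_le_pi_norm (Function.update x i c - x) i
            simp only [Pi.sub_apply, Function.update_self, hxi, sub_zero] at h2
            rw [Real.norm_of_nonneg hc0.le] at h2
            linarith
          refine ⟨(W * c + c * B) / (W + c * B + (1 - c) * (A - 1)), ?_,
            g_pos hW hA hB hc0 hc1, g_lt_one hW hA hB hc0 hc1, ?_⟩
          · rw [Function.iterate_succ_apply', hc,
              F_update0 hN1 w hw hwii Nbr hNbr b hb x hx hsum hNcast hA hB i hxi c hc0]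
          · calc r ^ (k+1) * a0 = r * (r ^ k * a0) := by ring
              _ ≤ r * c := by
                  apply mul_le_mul_of_nonneg_left hcr (by linarith)
              _ ≤ _ := by
                  rw [hrdef]
                  exact g_growth hW hA hB hAB hc0 hchalf
      obtain ⟨k, hk⟩ := pow_unbounded_of_one_lt ((1/2) / a0) hr1
      obtain ⟨c, hc, hc0, hc1, hcr⟩ := orb k
      have hbig : 1/2 < c := by
        have : (1/2) < r ^ k * a0 := by
          rw [div_lt_iff₀ ha0] at hk
          linarith
        linarith
      have h1 := hδy k
      rw [hc] at h1
      have h2 := norm_le_pi_norm (Function.update x i c - x) i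
      simp only [Pi.sub_apply, Function.update_self, hxi, sub_zero] at h2
      rw [Real.norm_of_nonneg hc0.le] at h2
      linarith
    · -- perturb a one agent downward
      have hBA' : B + 1 ≤ A := by
        rw [hAdef, hBdef]
        have : (N - n1 : ℕ) + 1 ≤ n1 := by
          by_contra hcon
          push_neg at hcon
          have : (n1 : ℝ) ≤ ((N - n1 : ℕ) : ℝ) := by exact_mod_cast (by omega : n1 ≤ N - n1)
          rw [← hAdef, ← hBdef] at this
          linarith
        exact_mod_cast this
      obtain ⟨i, hi⟩ := Finset.card_pos.1 (show 0 < (Finset.univ.filter (fun k => ¬ x k = 0)).card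
        from by rw [hcard1]; omega)
      have hxi : x i = 1 := (hx i).resolve_left (Finset.mem_filter.1 hi).2
      set W := w i i with hWdef
      have hW : 0 ≤ W := hwii i
      set a0 : ℝ := min (δ/2) (1/4) with ha0def
      have ha0 : 0 < a0 := lt_min (by linarith) (by norm_num)
      have ha0q : a0 ≤ 1/4 := min_le_right _ _
      set c0 : ℝ := 1 - a0 with hc0def
      have hc00 : 0 < c0 := by rw [hc0def]; linarith
      have hc01 : c0 < 1 := by rw [hc0def]; linarith
      set y : Fin N → ℝ := Function.update x i c0 with hydef
      have hyx : y - x = Pi.single i (-a0) := by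
        funext k
        by_cases hk : k = i
        · subst hk; simp [hydef, hxi, hc0def]
        · simp [hydef, Function.update_of_ne hk, Pi.single_eq_of_ne hk]
      have hnorm : ‖y - x‖ = a0 := by
        rw [hyx, Pi.norm_single, Real.norm_of_nonpos (by linarith : -a0 ≤ 0)]
        ring
      have hδy : ∀ k : ℕ, ‖(F w Nbr b)^[k] y - x‖ < 1/2 := by
        apply hδ'
        rw [hnorm]
        calc a0 ≤ δ/2 := min_le_left _ _
          _ < δ := by linarith
      set r : ℝ := (W + B - 1) / (W + c0 * (B - 1) + (1 - c0) * A) with hrdef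
      have hr0 : 0 < r := h_ratio_pos hW hA hB hc00 hc01
      have hr1 : r < 1 := h_ratio_lt_one hW hA hB hBA' hc00 hc01
      have orb : ∀ k : ℕ, ∃ c : ℝ, (F w Nbr b)^[k] y = Function.update x i c ∧
          0 < c ∧ c ≤ c0 ∧ c ≤ r ^ k * c0 := by
        intro k
        induction k with
        | zero =>
          exact ⟨c0, by simp [hydef], hc00, le_refl _, by simp⟩
        | succ k ih =>
          obtain ⟨c, hc, hcpos, hcc0, hcr⟩ := ih
          have hc1 : c < 1 := lt_of_le_of_lt hcc0 hc01
          refine ⟨(W * c + c * (B - 1)) / (W + c * (B - 1) + (1 - c) * A), ?_,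
            h_pos hW hA hB hcpos hc1, ?_, ?_⟩
          · rw [Function.iterate_succ_apply', hc,
              F_update1 hN1 w hw hwii Nbr hNbr b hb x hx hsum hNcast hA hB i hxi c hcpos]
          · have hd := h_decay hW hA hB hBA' hcpos hcc0 hc01
            rw [← hrdef] at hd
            calc (W * c + c * (B - 1)) / (W + c * (B - 1) + (1 - c) * A) ≤ r * c := hd
              _ ≤ 1 * c := by apply mul_le_mul_of_nonneg_right hr1.le hcpos.le
              _ = c := by ring
              _ ≤ c0 := hcc0
          · have hd := h_decay hW hA hB hBA' hcpos hcc0 hc01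
            rw [← hrdef] at hd
            calc (W * c + c * (B - 1)) / (W + c * (B - 1) + (1 - c) * A) ≤ r * c := hd
              _ ≤ r * (r ^ k * c0) := by
                  apply mul_le_mul_of_nonneg_left hcr hr0.le
              _ = r ^ (k+1) * c0 := by ring
      obtain ⟨k, hk⟩ := exists_pow_lt_of_lt_one (show (0:ℝ) < (1/2) / c0 from by positivity) hr1
      obtain ⟨c, hc, hcpos, hcc0, hcr⟩ := orb k
      have hsmall : c < 1/2 :=
        lt_of_le_of_lt hcr (by rw [← lt_div_iff₀ hc00]; exact hk)
      have h1 := hδy k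
      rw [hc] at h1
      have h2 := norm_le_pi_norm (Function.update x i c - x) i
      simp only [Pi.sub_apply, Function.update_self, hxi] at h2
      rw [Real.norm_of_nonpos (by linarith : c - 1 ≤ 0)] at h2
      linarith
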